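/- Let H be a complex inner product space, with inner product (·,·) linear in the first argument and conjugate-linear in the second. Let S, R : H → H be linear maps, let ψ ∈ H, let λ, ρ ∈ ℂ with λ ≠ ρ, and let φ : ℕ → H be a sequence of vectors. Assume: (i) Sψ + Rψ = λ·ψ; (ii) (Su, φ₀) = ρ·(u, φ₀) for every u ∈ H; and (iii) for every p ∈ ℕ and every u ∈ H, (Su, φ_{p+1}) = ρ·(u, φ_{p+1}) + (u, φ_p). Then for every s ∈ ℕ, (ψ, φ_s) = Σ_{p=0}^{s} (Rψ, φ_p) / (λ − ρ)^{s+1−p}. -/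

import Mathlib

variable {H : Type*} [NormedAddCommGroup H] [InnerProductSpace ℂ H]

/-- The inner product `(x, y)`, linear in the first argument and conjugate-linear
in the second, expressed via Mathlib's `inner` (which is linear in the second
argument) as `⟪y, x⟫`. -/
local notation "⟨" x ", " y "⟩" => (inner ℂ y x : ℂ)

theorem perturbation_identity_chain (S R : H →ₗ[ℂ] H) (ψ : H) (lam ρ : ℂ)
    (hne : lam ≠ ρ) (φ : ℕ → H)
    (h₁ : S ψ + R ψ = lam • ψ)
    (h₂ : ∀ u : H, ⟨S u, φ 0⟩ = ρ * ⟨u, φ 0⟩)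
    (h₃ : ∀ p : ℕ, ∀ u : H, ⟨S u, φ (p + 1)⟩ = ρ * ⟨u, φ (p + 1)⟩ + ⟨u, φ p⟩) :
    ∀ s : ℕ, ⟨ψ, φ s⟩ = ∑ p ∈ Finset.range (s + 1), ⟨R ψ, φ p⟩ / (lam - ρ) ^ (s + 1 - p) := by
  have hsub : (lam - ρ) ≠ 0 := sub_ne_zero.mpr hne
  have hS : S ψ = lam • ψ - R ψ := by
    rw [← h₁]; abel
  have key : ∀ v : H, ⟨S ψ, v⟩ = lam * ⟨ψ, v⟩ - ⟨R ψ, v⟩ := by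
    intro v
    rw [hS, inner_sub_right, inner_smul_right]
  intro s
  induction s with
  | zero =>
    have h := h₂ ψ
    rw [key (φ 0)] at h
    have h0 : (lam - ρ) * ⟨ψ, φ 0⟩ = ⟨R ψ, φ 0⟩ := by linear_combination h
    rw [Finset.sum_range_one]
    norm_num
    field_simp
    linear_combination h0
  | succ s ih =>
    have h := h₃ s ψ
    rw [key (φ (s + 1))] at h
    have step : ⟨ψ, φ (s + 1)⟩ = (⟨R ψ, φ (s + 1)⟩ + ⟨ψ, φ s⟩) / (lam - ρ) := by
      field_simp
      linear_combination h
    rw [step, ih]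
    conv_rhs => rw [Finset.sum_range_succ]
    rw [add_div, add_comm]
    congr 1
    · rw [Finset.sum_div]
      apply Finset.sum_congr rfl
      intro p hp
      have hps : p ≤ s := Nat.lt_succ_iff.mp (Finset.mem_range.mp hp)
      rw [div_div, ← pow_succ]
      congr 2
      omega
    · simp
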